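/- Let N ≥ 1 be an integer, M > 1, A > 0, B > 0, and set f(y) = (1 − |y|²)^{1/(M−1)} for y in the open unit ball of ℝ^N, D(y) = √(1 + 4|y|² / (A^{2(M−1)} B²)), and define u(x) = A^{−1} f(x/B) for |x| < B. Then for every x with |x| < B, writing y = x/B, the identity div_x ( u ∇_x(u^{M−1}) / √(1 + |∇_x(u^{M−1})|²) )(x) = − 2 (y · ∇f(y)) / (A^M B² D(y)) − (2 N f(y)) / (A^M B² D(y)³) · ( 1 + ((N−1)/N) · 4|y|² / (A^{2(M−1)} B²) ) holds. -/

import Mathlib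

set_option maxHeartbeats 1000000


open RealInnerProductSpace

noncomputable section

/-- Classical divergence of a vector field on `ℝ^N`: the sum of the partial
derivatives of the components. -/
def divergence {N : ℕ} (V : EuclideanSpace ℝ (Fin N) → EuclideanSpace ℝ (Fin N))
    (x : EuclideanSpace ℝ (Fin N)) : ℝ :=
  ∑ i, ⟪fderiv ℝ V x (EuclideanSpace.single i 1), EuclideanSpace.single i 1⟫

/-- The stationary profile `f(y) = (1 − |y|²)^{1/(M−1)}`. -/
def profSL {N : ℕ} (M : ℝ) (y : EuclideanSpace ℝ (Fin N)) : ℝ :=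
  (1 - ‖y‖ ^ 2) ^ (1/(M-1))

/-- The flux `u ∇(u^{M−1}) / √(1 + |∇(u^{M−1})|²)` of the speed-limited porous medium
equation for a stationary function `u`. -/
def fluxSLx {N : ℕ} (M : ℝ) (u : EuclideanSpace ℝ (Fin N) → ℝ)
    (x : EuclideanSpace ℝ (Fin N)) : EuclideanSpace ℝ (Fin N) :=
  (u x / Real.sqrt (1 + ‖gradient (fun y => u y ^ (M-1)) x‖ ^ 2)) •
    gradient (fun y => u y ^ (M-1)) x

/-- explicit divergence computation: for `u(x) = A⁻¹ f(x/B)` with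
`f(y) = (1 − |y|²)^{1/(M−1)}` and `D(y) = √(1 + 4|y|²/(A^{2(M−1)} B²))`, for `|x| < B`
and `y = x/B` one has
`div_x( u ∇_x(u^{M−1}) / √(1+|∇_x(u^{M−1})|²) )(x)
  = −2 (y·∇f(y))/(A^M B² D(y)) − (2N f(y))/(A^M B² D(y)³) (1 + ((N−1)/N) 4|y|²/(A^{2(M−1)}B²))`. -/
theorem stmt_7 (N : ℕ) (hN : 1 ≤ N) (M A B : ℝ) (hM : 1 < M) (hA : 0 < A) (hB : 0 < B) :
    ∀ x : EuclideanSpace ℝ (Fin N), ‖x‖ < B →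
      divergence (fluxSLx M (fun z => A⁻¹ * profSL M (B⁻¹ • z))) x =
        -2 * ⟪B⁻¹ • x, gradient (profSL M) (B⁻¹ • x)⟫ /
            (A ^ M * B ^ 2 * Real.sqrt (1 + 4 * ‖B⁻¹ • x‖ ^ 2 / (A ^ (2*(M-1)) * B ^ 2)))
          - 2 * N * profSL M (B⁻¹ • x) /
              (A ^ M * B ^ 2 *
                Real.sqrt (1 + 4 * ‖B⁻¹ • x‖ ^ 2 / (A ^ (2*(M-1)) * B ^ 2)) ^ 3) *
            (1 + ((N : ℝ) - 1) / N * (4 * ‖B⁻¹ • x‖ ^ 2 / (A ^ (2*(M-1)) * B ^ 2))) := by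
  intro x hx
  have hM1 : (0:ℝ) < M - 1 := by linarith
  have hMne : M - 1 ≠ 0 := ne_of_gt hM1
  have hBne : B ≠ 0 := ne_of_gt hB
  have hBi : (0:ℝ) < B⁻¹ := inv_pos.mpr hB
  have hNpos : (0:ℝ) < N := by exact_mod_cast Nat.lt_of_lt_of_le Nat.zero_lt_one hN
  set p : ℝ := 1 / (M - 1) with hp
  set CA : ℝ := A ^ (1 - M) with hCA
  have hCApos : 0 < CA := Real.rpow_pos_of_pos hA _
  have hA2pos : (0:ℝ) < A ^ (2*(M-1)) := Real.rpow_pos_of_pos hA _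
  have hAMpos : (0:ℝ) < A ^ M := Real.rpow_pos_of_pos hA _
  have hCAsq : CA ^ 2 = (A ^ (2*(M-1)))⁻¹ := by
    rw [hCA, ← Real.rpow_natCast (A ^ (1 - M)) 2, ← Real.rpow_mul hA.le,
      show (1 - M) * ((2:ℕ):ℝ) = -(2*(M-1)) by push_cast; ring, Real.rpow_neg hA.le]
  have hAM : A⁻¹ * CA = (A ^ M)⁻¹ := by
    rw [hCA, ← Real.rpow_neg_one A, ← Real.rpow_add hA,
      show (-1 + (1 - M)) = -M by ring, Real.rpow_neg hA.le]
  set k : ℝ := 4 * CA ^ 2 * B⁻¹ ^ 2 * B⁻¹ ^ 2 with hk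
  have hkpos : 0 < k := by positivity
  set y : EuclideanSpace ℝ (Fin N) := B⁻¹ • x with hy
  have hyT : ‖y‖ ^ 2 = B⁻¹ ^ 2 * ‖x‖ ^ 2 := by
    rw [hy, norm_smul, Real.norm_eq_abs, abs_of_pos hBi, mul_pow]
  have ht1 : 0 < 1 - ‖y‖ ^ 2 := by
    have h1 : ‖y‖ < 1 := by
      rw [hy, norm_smul, Real.norm_eq_abs, abs_of_pos hBi]
      calc B⁻¹ * ‖x‖ < B⁻¹ * B := by exact (mul_lt_mul_iff_right₀ hBi).mpr hx
        _ = 1 := inv_mul_cancel₀ hBne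
    have h2 := pow_lt_one₀ (norm_nonneg y) h1 two_ne_zero
    linarith
  have harg : 0 < 1 + k * ‖x‖ ^ 2 := by positivity
  have hDp : 0 < Real.sqrt (1 + k * ‖x‖ ^ 2) := Real.sqrt_pos.mpr harg
  -- fderiv of norm squared
  have hq : ∀ z : EuclideanSpace ℝ (Fin N),
      HasFDerivAt (fun w : EuclideanSpace ℝ (Fin N) => ‖w‖ ^ 2) ((2:ℝ) • (innerSL ℝ z)) z := by
    intro z
    have h := (hasFDerivAt_id z).inner ℝ (hasFDerivAt_id z)
    simp only [id_eq, real_inner_self_eq_norm_sq] at h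
    refine h.congr_fderiv ?_
    ext v
    simp only [ContinuousLinearMap.smul_apply, innerSL_apply_apply, smul_eq_mul,
      ContinuousLinearMap.comp_apply, ContinuousLinearMap.prod_apply,
      ContinuousLinearMap.id_apply, fderivInnerCLM_apply]
    rw [real_inner_comm v z]
    ring
  -- derivative of profSL at y
  set pp : ℝ := p * (1 - ‖y‖ ^ 2) ^ (p - 1) with hpp
  have hprof : HasFDerivAt (profSL M (N := N)) (pp • (((-2):ℝ) • innerSL ℝ y)) y := by
    have h1 : HasFDerivAt (fun w : EuclideanSpace ℝ (Fin N) => 1 - ‖w‖ ^ 2)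
        (((-2):ℝ) • innerSL ℝ y) y := by
      have h := (hasFDerivAt_const (1:ℝ) y).sub (hq y)
      refine h.congr_fderiv ?_
      ext v
      simp
    exact h1.rpow_const (Or.inl (ne_of_gt ht1))
  set cf : ℝ := -2 * pp with hcf
  have hgradf : gradient (profSL M) y = cf • y := by
    apply HasGradientAt.gradient
    rw [hasGradientAt_iff_hasFDerivAt]
    refine hprof.congr_fderiv ?_
    ext v
    simp only [InnerProductSpace.toDual_apply_apply, ContinuousLinearMap.smul_apply,
      innerSL_apply_apply, smul_eq_mul, real_inner_smul_left, hcf]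
    ring
  have hinner_y : ⟪y, gradient (profSL M) y⟫ = cf * (B⁻¹ ^ 2 * ‖x‖ ^ 2) := by
    rw [hgradf, real_inner_smul_right, real_inner_self_eq_norm_sq, hyT]
  -- local polynomial form of u^{M-1}
  have hloc : ∀ z : EuclideanSpace ℝ (Fin N), ‖z‖ < B →
      (A⁻¹ * profSL M (B⁻¹ • z)) ^ (M-1) = CA - CA * B⁻¹ ^ 2 * ‖z‖ ^ 2 := by
    intro z hz
    have hzt : ‖B⁻¹ • z‖ ^ 2 = B⁻¹ ^ 2 * ‖z‖ ^ 2 := by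
      rw [norm_smul, Real.norm_eq_abs, abs_of_pos hBi, mul_pow]
    have hzpos : 0 < 1 - ‖B⁻¹ • z‖ ^ 2 := by
      rw [hzt]
      have h1 : B⁻¹ * ‖z‖ < 1 := by
        calc B⁻¹ * ‖z‖ < B⁻¹ * B := by exact (mul_lt_mul_iff_right₀ hBi).mpr hz
          _ = 1 := inv_mul_cancel₀ hBne
      have h2 := pow_lt_one₀ (mul_nonneg hBi.le (norm_nonneg z)) h1 two_ne_zero
      rw [mul_pow] at h2
      linarith
    unfold profSL
    rw [Real.mul_rpow (inv_nonneg.mpr hA.le) (Real.rpow_nonneg hzpos.le _),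
      ← Real.rpow_mul hzpos.le,
      show 1/(M-1) * (M-1) = 1 by field_simp, Real.rpow_one,
      Real.inv_rpow hA.le, ← Real.rpow_neg hA.le, show -(M-1) = 1 - M by ring,
      hzt, ← hCA]
    ring
  -- gradient of u^{M-1} on the ball
  have hpoly : ∀ z : EuclideanSpace ℝ (Fin N),
      HasFDerivAt (fun w : EuclideanSpace ℝ (Fin N) => CA - CA * B⁻¹ ^ 2 * ‖w‖ ^ 2)
        ((-(CA * B⁻¹ ^ 2)) • ((2:ℝ) • innerSL ℝ z)) z := by
    intro z
    have h := (hasFDerivAt_const CA z).sub ((hq z).const_mul (CA * B⁻¹ ^ 2))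
    refine h.congr_fderiv ?_
    ext v
    simp only [ContinuousLinearMap.neg_apply, ContinuousLinearMap.smul_apply,
      innerSL_apply_apply, smul_eq_mul, ContinuousLinearMap.sub_apply,
      ContinuousLinearMap.zero_apply]
    ring
  have hgradg : ∀ z : EuclideanSpace ℝ (Fin N), ‖z‖ < B →
      gradient (fun w => (A⁻¹ * profSL M (B⁻¹ • w)) ^ (M-1)) z
        = (-2 * CA * B⁻¹ ^ 2) • z := by
    intro z hz
    have hev : (fun w => (A⁻¹ * profSL M (B⁻¹ • w)) ^ (M-1)) =ᶠ[nhds z]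
        (fun w : EuclideanSpace ℝ (Fin N) => CA - CA * B⁻¹ ^ 2 * ‖w‖ ^ 2) := by
      filter_upwards [Metric.isOpen_ball.mem_nhds (mem_ball_zero_iff.mpr hz)] with w hw
      exact hloc w (mem_ball_zero_iff.mp hw)
    rw [hev.gradient_eq]
    apply HasGradientAt.gradient
    rw [hasGradientAt_iff_hasFDerivAt]
    refine (hpoly z).congr_fderiv ?_
    ext v
    simp only [InnerProductSpace.toDual_apply_apply, ContinuousLinearMap.smul_apply,
      innerSL_apply_apply, smul_eq_mul, real_inner_smul_left]
    ring
  -- the flux as an explicit vector field on the ball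
  set φ : EuclideanSpace ℝ (Fin N) → ℝ := fun z =>
    -2 * (A ^ M)⁻¹ * B⁻¹ ^ 2 * profSL M (B⁻¹ • z) * (Real.sqrt (1 + k * ‖z‖ ^ 2))⁻¹ with hφ
  have hflux : ∀ z : EuclideanSpace ℝ (Fin N), ‖z‖ < B →
      fluxSLx M (fun w => A⁻¹ * profSL M (B⁻¹ • w)) z = φ z • z := by
    intro z hz
    have h1 := hgradg z hz
    have hDzpos : 0 < Real.sqrt (1 + k * ‖z‖ ^ 2) := Real.sqrt_pos.mpr (by positivity)
    simp only [fluxSLx]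
    rw [h1, smul_smul]
    congr 1
    have hns : ‖(-2 * CA * B⁻¹ ^ 2) • z‖ ^ 2 = k * ‖z‖ ^ 2 := by
      rw [norm_smul, Real.norm_eq_abs, mul_pow, sq_abs, hk]
      ring
    rw [hns]
    simp only [hφ]
    rw [← hAM]
    field_simp
  -- derivative pieces at x
  have hsm : HasFDerivAt (fun z : EuclideanSpace ℝ (Fin N) => B⁻¹ • z)
      (B⁻¹ • ContinuousLinearMap.id ℝ (EuclideanSpace ℝ (Fin N))) x :=
    (hasFDerivAt_id x).const_smul B⁻¹
  have hF : HasFDerivAt (fun z : EuclideanSpace ℝ (Fin N) => profSL M (B⁻¹ • z))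
      ((pp • (((-2):ℝ) • innerSL ℝ y)).comp
        (B⁻¹ • ContinuousLinearMap.id ℝ (EuclideanSpace ℝ (Fin N)))) x :=
    by have := hprof.comp x hsm; exact this
  have hDa : HasFDerivAt (fun z : EuclideanSpace ℝ (Fin N) => 1 + k * ‖z‖ ^ 2)
      (k • ((2:ℝ) • innerSL ℝ x)) x := by
    have h := (hasFDerivAt_const (1:ℝ) x).add ((hq x).const_mul k)
    refine h.congr_fderiv ?_
    ext v
    simp only [ContinuousLinearMap.smul_apply, innerSL_apply_apply, smul_eq_mul,
      ContinuousLinearMap.add_apply, ContinuousLinearMap.zero_apply]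
    ring
  have hDS := hDa.sqrt (ne_of_gt harg)
  have hDinv := (hasDerivAt_inv (ne_of_gt hDp)).comp_hasFDerivAt x hDS
  have hφ' := (hF.const_mul (-2 * (A ^ M)⁻¹ * B⁻¹ ^ 2)).mul hDinv
  have hW := hφ'.smul (hasFDerivAt_id x)
  have hev : fluxSLx M (fun z => A⁻¹ * profSL M (B⁻¹ • z)) =ᶠ[nhds x] fun z => φ z • z := by
    filter_upwards [Metric.isOpen_ball.mem_nhds (mem_ball_zero_iff.mpr hx)] with w hw
    exact hflux w (mem_ball_zero_iff.mp hw)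
  have hfd := hev.fderiv_eq.trans hW.fderiv
  have hyi : ∀ i : Fin N, y i = B⁻¹ * x i := by
    intro i; rw [hy]; rfl
  have hxx : ∑ i, x i * x i = ‖x‖ ^ 2 := by
    rw [← real_inner_self_eq_norm_sq, PiLp.inner_apply]
    simp only [RCLike.inner_apply, conj_trivial]
  have hfactor : 4 * ‖y‖ ^ 2 / (A ^ (2*(M-1)) * B ^ 2) = k * ‖x‖ ^ 2 := by
    rw [hyT, hk, hCAsq, div_eq_iff (mul_pos hA2pos (by positivity : (0:ℝ) < B ^ 2)).ne']
    field_simp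
  have hargeq : 1 + 4 * ‖y‖ ^ 2 / (A ^ (2*(M-1)) * B ^ 2) = 1 + k * ‖x‖ ^ 2 := by
    rw [hfactor]
  have hD3 : Real.sqrt (1 + k * ‖x‖ ^ 2) ^ 3
      = (1 + k * ‖x‖ ^ 2) * Real.sqrt (1 + k * ‖x‖ ^ 2) := by
    rw [pow_succ, Real.sq_sqrt harg.le]
  simp only [divergence]
  rw [hfd]
  trans (∑ _i : Fin N,
    ((-2 * (A ^ M)⁻¹ * B⁻¹ ^ 2 * profSL M y * (-k) * (1 + k * ‖x‖ ^ 2)⁻¹ *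
        (Real.sqrt (1 + k * ‖x‖ ^ 2))⁻¹
      + -2 * (A ^ M)⁻¹ * B⁻¹ ^ 2 * pp * (-2) * B⁻¹ ^ 2 *
        (Real.sqrt (1 + k * ‖x‖ ^ 2))⁻¹) * (x _i * x _i) + φ x))
  · refine Finset.sum_congr rfl fun i _ => ?_
    simp only [ContinuousLinearMap.add_apply, ContinuousLinearMap.smul_apply,
      ContinuousLinearMap.coe_smul', Pi.smul_apply, ContinuousLinearMap.id_apply,
      ContinuousLinearMap.smulRight_apply, ContinuousLinearMap.comp_apply,
      ContinuousLinearMap.neg_apply, innerSL_apply_apply, smul_eq_mul, id_eq,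
      inner_add_left, real_inner_smul_left, real_inner_smul_right,
      EuclideanSpace.inner_single_right, EuclideanSpace.single_apply,
      conj_trivial, eq_self_iff_true, if_true, mul_one, one_mul, Function.comp_apply]
    simp only [hyi, hφ, ← hy, Pi.mul_apply, Function.comp_apply, PiLp.smul_apply, smul_eq_mul, EuclideanSpace.single_apply,
      eq_self_iff_true, if_true, mul_one]
    rw [Real.sq_sqrt harg.le]
    ring
  · rw [Finset.sum_add_distrib, ← Finset.mul_sum, hxx, Finset.sum_const, Finset.card_univ,
      Fintype.card_fin, nsmul_eq_mul]
    rw [hinner_y, hargeq, hfactor, hD3]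
    simp only [hφ, hcf, ← hy]
    field_simp
    ring

end
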